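/- Let (V,*) be a magmatic algebra with * extended to T(V). Then for all f,g,h ∈ T(V): (f*g)*h = Σ f * ((g*h⁽¹⁾) h⁽²⁾), where Δ_⧢(h) = Σ h⁽¹⁾⊗h⁽²⁾. -/

import Mathlib

open scoped TensorProduct

noncomputable section

variable (K V : Type*) [Field K] [AddCommGroup V] [Module K V]

/-- The deshuffling coproduct on the tensor algebra: the unique algebra morphism
sending `x : V` to `x ⊗ 1 + 1 ⊗ x`. -/
def deshuffle : TensorAlgebra K V →ₐ[K]
    TensorAlgebra K V ⊗[K] TensorAlgebra K V :=
  TensorAlgebra.lift K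
    (((TensorProduct.mk K (TensorAlgebra K V) (TensorAlgebra K V)).flip 1) ∘ₗ TensorAlgebra.ι K
      + (TensorProduct.mk K (TensorAlgebra K V) (TensorAlgebra K V) 1) ∘ₗ TensorAlgebra.ι K)

/-- The counit of the tensor algebra: the algebra morphism killing `V`. -/
def tensorCounit : TensorAlgebra K V →ₐ[K] K :=
  TensorAlgebra.lift K (0 : V →ₗ[K] K)

variable {K V}

/-- `star` is the canonical extension to `T(V)` of the magmatic product `m` on `V`:
(i) `f*1 = f`; (ii) `1*f = ε(f)1`; (iii) `x*(fy) = (x*f)*y − x*(f*y)`;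
(iv) `(fg)*h = Σ (f*h⁽¹⁾)(g*h⁽²⁾)`, and `star` restricted to `V` is `m`. -/
def IsMagExt (m : V →ₗ[K] V →ₗ[K] V)
    (star : TensorAlgebra K V →ₗ[K] TensorAlgebra K V →ₗ[K] TensorAlgebra K V) : Prop :=
  (∀ x y : V, star (TensorAlgebra.ι K x) (TensorAlgebra.ι K y) = TensorAlgebra.ι K (m x y)) ∧
  (∀ f, star f 1 = f) ∧
  (∀ f, star 1 f = (tensorCounit K V f) • 1) ∧
  (∀ (x : V) (f : TensorAlgebra K V) (y : V),
    star (TensorAlgebra.ι K x) (f * TensorAlgebra.ι K y)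
      = star (star (TensorAlgebra.ι K x) f) (TensorAlgebra.ι K y)
        - star (TensorAlgebra.ι K x) (star f (TensorAlgebra.ι K y))) ∧
  (∀ f g h, star (f * g) h
      = LinearMap.mul' K (TensorAlgebra K V)
          (TensorProduct.map (star f) (star g) (deshuffle K V h)))


/-- The product `f ⊛ g = Σ (f*g⁽¹⁾) g⁽²⁾` on `T(V)`, as a bilinear map. -/
def circLM (star : TensorAlgebra K V →ₗ[K] TensorAlgebra K V →ₗ[K] TensorAlgebra K V) :
    TensorAlgebra K V →ₗ[K] TensorAlgebra K V →ₗ[K] TensorAlgebra K V where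
  toFun f := LinearMap.mul' K (TensorAlgebra K V)
      ∘ₗ LinearMap.rTensor (TensorAlgebra K V) (star f)
      ∘ₗ (deshuffle K V).toLinearMap
  map_add' f g := by ext h; simp [LinearMap.rTensor_add]
  map_smul' c f := by ext h; simp [LinearMap.rTensor_smul]


namespace MagExtAux

variable {K V : Type*} [Field K] [AddCommGroup V] [Module K V]
variable {m : V →ₗ[K] V →ₗ[K] V}
variable {star : TensorAlgebra K V →ₗ[K] TensorAlgebra K V →ₗ[K] TensorAlgebra K V}

local notation "T" => TensorAlgebra K V
local notation "ιT" => TensorAlgebra.ι K (M := V)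
local notation "ε" => tensorCounit K V
local notation "Δ" => deshuffle K V
local notation "μ" => LinearMap.mul' K (TensorAlgebra K V)

lemma counit_ι (x : V) : ε (ιT x) = 0 := by simp [tensorCounit]

lemma deshuffle_ι (x : V) : Δ (ιT x) = ιT x ⊗ₜ[K] 1 + 1 ⊗ₜ[K] ιT x := by
  simp [deshuffle]

lemma circ_apply (g h : T) :
    circLM star g h = μ (LinearMap.rTensor (TensorAlgebra K V) (star g) (Δ h)) := rfl

-- L7 : star (u*v) (ι y) = star u (ι y) * v + u * star v (ι y)
lemma star_mul_iota (hs : IsMagExt m star) (u v : T) (y : V) :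
    star (u * v) (ιT y) = star u (ιT y) * v + u * star v (ιT y) := by
  rw [hs.2.2.2.2, deshuffle_ι]
  simp [hs.2.1 u, hs.2.1 v]

-- star with 1 on the left of pair as scalars
lemma star_one_right (hs : IsMagExt m star) (f : T) : star f 1 = f := hs.2.1 f

lemma star_one_iota (hs : IsMagExt m star) (y : V) : star 1 (ιT y) = 0 := by
  rw [hs.2.2.1, counit_ι, zero_smul]

-- A0 : counit of star f (ι y) is 0
lemma counit_star_iota (hs : IsMagExt m star) (y : V) (f : T) :
    ε (star f (ιT y)) = 0 := by
  induction f using TensorAlgebra.induction with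
  | algebraMap r =>
      rw [Algebra.algebraMap_eq_smul_one, map_smul, LinearMap.smul_apply,
        star_one_iota hs, smul_zero, map_zero]
  | ι x => rw [hs.1 x y, counit_ι]
  | mul a b ha hb => rw [star_mul_iota hs, map_add, map_mul, map_mul, ha, hb]; simp
  | add a b ha hb => rw [map_add, LinearMap.add_apply, map_add, ha, hb, add_zero]

-- the coderivation D_y on T ⊗ T
def Dy (star : TensorAlgebra K V →ₗ[K] TensorAlgebra K V →ₗ[K] TensorAlgebra K V) (y : V) :
    TensorAlgebra K V ⊗[K] TensorAlgebra K V →ₗ[K] TensorAlgebra K V ⊗[K] TensorAlgebra K V :=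
  LinearMap.rTensor (TensorAlgebra K V) (star.flip (TensorAlgebra.ι K y))
    + LinearMap.lTensor (TensorAlgebra K V) (star.flip (TensorAlgebra.ι K y))

lemma Dy_tmul (u v : T) (y : V) :
    Dy star y (u ⊗ₜ[K] v) = star u (ιT y) ⊗ₜ[K] v + u ⊗ₜ[K] star v (ιT y) := by
  simp [Dy]

lemma Dy_one (hs : IsMagExt m star) (y : V) :
    Dy star y (1 : T ⊗[K] T) = 0 := by
  rw [Algebra.TensorProduct.one_def, Dy_tmul, star_one_iota hs]
  simp

-- Dy is a derivation
lemma Dy_mul (hs : IsMagExt m star) (y : V) (s t : T ⊗[K] T) :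
    Dy star y (s * t) = Dy star y s * t + s * Dy star y t := by
  induction s using TensorProduct.induction_on with
  | zero => simp
  | add s₁ s₂ h₁ h₂ => simp only [add_mul, map_add, h₁, h₂]; abel
  | tmul u v =>
    induction t using TensorProduct.induction_on with
    | zero => simp
    | add t₁ t₂ h₁ h₂ => simp only [mul_add, map_add, h₁, h₂]; abel
    | tmul u' v' =>
      rw [Algebra.TensorProduct.tmul_mul_tmul, Dy_tmul, Dy_tmul, Dy_tmul,
        star_mul_iota hs, star_mul_iota hs]
      simp only [add_mul, mul_add, TensorProduct.add_tmul, TensorProduct.tmul_add,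
        Algebra.TensorProduct.tmul_mul_tmul]
      abel

-- L2 : Δ (star f (ι y)) = Dy (Δ f)
lemma deshuffle_star_iota (hs : IsMagExt m star) (y : V) (f : T) :
    Δ (star f (ιT y)) = Dy star y (Δ f) := by
  induction f using TensorAlgebra.induction with
  | algebraMap r =>
      rw [Algebra.algebraMap_eq_smul_one, map_smul, LinearMap.smul_apply,
        star_one_iota hs, smul_zero, map_zero, map_smul, map_one, map_smul,
        Dy_one hs, smul_zero]
  | ι x =>
      rw [hs.1 x y, deshuffle_ι, deshuffle_ι, map_add, Dy_tmul, Dy_tmul,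
        star_one_iota hs, hs.1 x y]
      simp
  | mul a b ha hb =>
      rw [star_mul_iota hs, map_add, map_mul, map_mul, ha, hb, map_mul, Dy_mul hs]
  | add a b ha hb =>
      rw [map_add, LinearMap.add_apply, map_add, ha, hb, map_add, map_add]


-- L6 : star (star f g) (ι y) = star f (star g (ι y)) + star f (g * ι y)
lemma star_star_iota (hs : IsMagExt m star) (y : V) (f : T) :
    ∀ g : T, star (star f g) (ιT y) = star f (star g (ιT y)) + star f (g * ιT y) := by
  induction f using TensorAlgebra.induction with
  | algebraMap r =>
      intro g
      rw [Algebra.algebraMap_eq_smul_one]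
      simp only [map_smul, LinearMap.smul_apply]
      rw [hs.2.2.1 g, hs.2.2.1 (star g (ιT y)), hs.2.2.1 (g * ιT y),
        counit_star_iota hs, map_mul, counit_ι]
      simp only [map_smul, LinearMap.smul_apply, star_one_iota hs]
      simp
  | ι x =>
      intro g
      rw [hs.2.2.2.1 x g y]
      abel
  | add a b ha hb =>
      intro g
      simp only [map_add, LinearMap.add_apply, ha g, hb g]
      abel
  | mul a b ha hb =>
      intro g
      rw [hs.2.2.2.2 a b g, hs.2.2.2.2 a b (star g (ιT y)), hs.2.2.2.2 a b (g * ιT y),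
        deshuffle_star_iota hs, map_mul, deshuffle_ι]
      generalize deshuffle K V g = t
      induction t using TensorProduct.induction_on with
      | zero => simp
      | tmul u v =>
          simp only [TensorProduct.map_tmul, LinearMap.mul'_apply, Dy_tmul, mul_add,
            Algebra.TensorProduct.tmul_mul_tmul, mul_one, one_mul, map_add,
            TensorProduct.add_tmul, TensorProduct.tmul_add, LinearMap.add_apply]
          rw [star_mul_iota hs, ha u, hb v]
          simp only [add_mul, mul_add]
          abel
      | add t₁ t₂ h₁ h₂ =>
          simp only [map_add, add_mul, LinearMap.add_apply, h₁, h₂]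
          abel

-- filtration by word length
def Fil (K V : Type*) [Field K] [AddCommGroup V] [Module K V] :
    ℕ → Submodule K (TensorAlgebra K V)
  | 0 => 1
  | n + 1 => Fil K V n ⊔
      Fil K V n * Submodule.span K (Set.range (TensorAlgebra.ι K : V →ₗ[K] TensorAlgebra K V))

lemma fil_le_succ (n : ℕ) : Fil K V n ≤ Fil K V (n + 1) := le_sup_left

lemma fil_mono {n k : ℕ} (h : n ≤ k) : Fil K V n ≤ Fil K V k := by
  induction k with
  | zero => exact Nat.le_zero.mp h ▸ le_rfl
  | succ k ih =>
      rcases Nat.lt_or_ge n (k+1) with h' | h'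
      · exact (ih (Nat.lt_succ_iff.mp h')).trans (fil_le_succ k)
      · exact Nat.le_antisymm h h' ▸ le_rfl

lemma one_mem_fil (n : ℕ) : (1 : T) ∈ Fil K V n := by
  induction n with
  | zero => exact Submodule.one_le.mp le_rfl
  | succ n ih => exact fil_le_succ n ih

lemma fil_mul_le (n k : ℕ) : Fil K V n * Fil K V k ≤ Fil K V (n + k) := by
  induction k with
  | zero =>
      rw [show Fil K V 0 = (1 : Submodule K (TensorAlgebra K V)) from rfl, Submodule.mul_one]
      exact le_rfl
  | succ k ih =>
      show Fil K V n * (Fil K V k ⊔ Fil K V k * _) ≤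
        Fil K V (n + k) ⊔ Fil K V (n + k) * _
      rw [Submodule.mul_sup, ← mul_assoc]
      exact sup_le_sup ih (mul_le_mul' ih le_rfl)

lemma exists_mem_fil (h : T) : ∃ n, h ∈ Fil K V n := by
  induction h using TensorAlgebra.induction with
  | algebraMap r =>
      exact ⟨0, by rw [Algebra.algebraMap_eq_smul_one]; exact Submodule.smul_mem _ _ (one_mem_fil 0)⟩
  | ι x =>
      refine ⟨1, le_sup_right (α := Submodule K (TensorAlgebra K V)) (?_ : _ ∈ Fil K V 0 * _)⟩
      rw [show Fil K V 0 = (1 : Submodule K (TensorAlgebra K V)) from rfl, Submodule.one_mul]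
      exact Submodule.subset_span ⟨x, rfl⟩
  | add a b ha hb =>
      obtain ⟨n, hn⟩ := ha; obtain ⟨k, hk⟩ := hb
      exact ⟨max n k, Submodule.add_mem _ (fil_mono (le_max_left n k) hn)
        (fil_mono (le_max_right n k) hk)⟩
  | mul a b ha hb =>
      obtain ⟨n, hn⟩ := ha; obtain ⟨k, hk⟩ := hb
      exact ⟨n + k, fil_mul_le n k (Submodule.mul_mem_mul hn hk)⟩

-- L4 : grading lemma
lemma star_iota_mem_fil (hs : IsMagExt m star) :
    ∀ n, ∀ f ∈ Fil K V n, ∀ y : V, star f (ιT y) ∈ Fil K V n := by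
  intro n
  induction n with
  | zero =>
      intro f hf y
      obtain ⟨c, rfl⟩ := Submodule.mem_one.mp hf
      rw [Algebra.algebraMap_eq_smul_one, map_smul, LinearMap.smul_apply, star_one_iota hs,
        smul_zero]
      exact Submodule.zero_mem _
  | succ n ih =>
      intro f hf y
      obtain ⟨b, hb, c, hc, rfl⟩ := Submodule.mem_sup.mp hf
      rw [map_add, LinearMap.add_apply]
      refine Submodule.add_mem _ (fil_le_succ n (ih b hb y)) ?_
      refine Submodule.mul_induction_on hc (fun a ha w hw => ?_)
        (fun u v hu hv => by rw [map_add, LinearMap.add_apply]; exact Submodule.add_mem _ hu hv)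
      induction hw using Submodule.span_induction with
      | mem w hw =>
          obtain ⟨x, rfl⟩ := hw
          rw [star_mul_iota hs, hs.1 x y]
          exact Submodule.add_mem _
            (Submodule.mem_sup_right (Submodule.mul_mem_mul (ih a ha y) (Submodule.subset_span ⟨x, rfl⟩)))
            (Submodule.mem_sup_right (Submodule.mul_mem_mul ha (Submodule.subset_span ⟨m x y, rfl⟩)))
      | zero => rw [mul_zero, map_zero, LinearMap.zero_apply]; exact Submodule.zero_mem _
      | add w₁ w₂ h₁ h₂ p₁ p₂ =>
          rw [mul_add, map_add, LinearMap.add_apply]; exact Submodule.add_mem _ p₁ p₂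
      | smul c w hw p =>
          rw [mul_smul_comm, map_smul, LinearMap.smul_apply]; exact Submodule.smul_mem _ _ p

-- circ with 1
lemma circ_one (hs : IsMagExt m star) (g : T) : circLM star g 1 = g := by
  rw [circ_apply, map_one, Algebra.TensorProduct.one_def, LinearMap.rTensor_tmul,
    LinearMap.mul'_apply, star_one_right hs, mul_one]

-- (★) key second-argument identity
lemma star_key (hs : IsMagExt m star) (g h : T) (y : V) :
    circLM star g (h * ιT y) + circLM star g (star h (ιT y))
      = star (circLM star g h) (ιT y) + circLM star g h * ιT y := by
  rw [circ_apply, circ_apply, circ_apply, map_mul, deshuffle_ι, deshuffle_star_iota hs]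
  set C : TensorAlgebra K V ⊗[K] TensorAlgebra K V →ₗ[K] TensorAlgebra K V :=
    (LinearMap.mul' K (TensorAlgebra K V)) ∘ₗ LinearMap.rTensor (TensorAlgebra K V) (star g)
    with hC
  have hmap : C ∘ₗ (LinearMap.mulRight K ((ιT y) ⊗ₜ[K] (1 : T) + (1 : T) ⊗ₜ[K] (ιT y)))
        + C ∘ₗ Dy star y
      = (star.flip (ιT y)) ∘ₗ C + (LinearMap.mulRight K (ιT y)) ∘ₗ C := by
    apply TensorProduct.ext'
    intro u v
    simp only [LinearMap.add_apply, LinearMap.comp_apply, LinearMap.mulRight_apply, hC,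
      Dy_tmul, mul_add, Algebra.TensorProduct.tmul_mul_tmul, mul_one, one_mul, map_add,
      LinearMap.rTensor_tmul, LinearMap.mul'_apply, TensorProduct.add_tmul,
      TensorProduct.tmul_add, LinearMap.flip_apply]
    rw [star_mul_iota hs, star_star_iota hs y g u]
    simp only [add_mul, mul_add, mul_assoc]
    abel
  have := LinearMap.congr_fun hmap (deshuffle K V h)
  simpa only [LinearMap.add_apply, LinearMap.comp_apply, LinearMap.mulRight_apply,
    LinearMap.flip_apply, hC] using this

-- main theorem over the filtration
lemma main_fil (hs : IsMagExt m star) :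
    ∀ n, ∀ h ∈ Fil K V n, ∀ f g : T, star (star f g) h = star f (circLM star g h) := by
  intro n
  induction n with
  | zero =>
      intro h hh f g
      obtain ⟨c, rfl⟩ := Submodule.mem_one.mp hh
      rw [Algebra.algebraMap_eq_smul_one, map_smul, map_smul, star_one_right hs, circ_one hs, map_smul]
  | succ n ih =>
      intro h hh f g
      obtain ⟨b, hb, c, hc, rfl⟩ := Submodule.mem_sup.mp hh
      have hcase : ∀ f g : T, star (star f g) c = star f (circLM star g c) := by
        refine Submodule.mul_induction_on hc ?_ ?_
        · intro a ha w hw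
          induction hw using Submodule.span_induction with
          | mem w hw =>
              obtain ⟨x, rfl⟩ := hw
              intro f g
              have A := star_star_iota hs x (star f g) a
              rw [ih a ha f g] at A
              have B : star (star f g) (star a (ιT x)) = star f (circLM star g (star a (ιT x))) :=
                ih _ (star_iota_mem_fil hs n a ha x) f g
              have D := star_star_iota hs x f (circLM star g a)
              have E := star_key hs g a x
              have E' := congrArg (star f) E
              rw [map_add, map_add] at E'
              rw [B, D, ← E'] at A
              rw [add_comm (star f (circLM star g (a * ιT x)))
                (star f (circLM star g (star a (ιT x))))] at A
              exact (add_left_cancel A).symm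
          | zero =>
              intro f g
              simp
          | add w₁ w₂ hw₁ hw₂ p₁ p₂ =>
              intro f g
              rw [mul_add, map_add, map_add, map_add, p₁ f g, p₂ f g]
          | smul k w hw p =>
              intro f g
              rw [mul_smul_comm, map_smul, map_smul, map_smul, p f g]
        · intro u v hu hv f g
          rw [map_add, map_add, map_add, hu f g, hv f g]
      rw [map_add, map_add, map_add, ih b hb f g, hcase f g]

end MagExtAux

/-- `(f*g)*h = Σ f*((g*h⁽¹⁾)h⁽²⁾)`, i.e. `(f*g)*h = f*(g ⊛ h)`. -/
theorem star_star_eq_star_circ (m : V →ₗ[K] V →ₗ[K] V)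
    (star : TensorAlgebra K V →ₗ[K] TensorAlgebra K V →ₗ[K] TensorAlgebra K V)
    (hstar : IsMagExt m star) :
    ∀ f g h : TensorAlgebra K V,
      star (star f g) h = star f (circLM star g h) := by
  intro f g h
  obtain ⟨n, hn⟩ := MagExtAux.exists_mem_fil h
  exact MagExtAux.main_fil hstar n h hn f g

end
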